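/- arXiv:2603.23217 — 4 statements merged into one kernel-verified Lean document; each statement's English description precedes it below -/
import Mathlib

section
/- Fix a positive integer K. For each k = 1,...,K, fix positive reals n_k, c_k, ρ_k, γ_k, t_u_k, t_d_k, t_c_k, h_u_k, h_d_k, p_u_k (maximum uplink power), a real d_k and a real L_k, and fix positive reals N0, B_max, P_max, F_max. Consider the set of tuples (l, D, Du, Dd, B, f, p) ∈ (ℝ^K)^7 satisfying, for every k: (i) l_k ≥ c_k / (2^{(2/n_k)(D_k − L_k)} − 1) + d_k; (ii) D_k > L_k; (iii) D_k ≤ ρ_k · Du_k; (iv) D_k ≤ Dd_k; (v) Du_k ≤ t_u_k · B_k · log₂(1 + h_u_k · p_u_k / (B_k · N0)); (vi) Dd_k ≤ t_d_k · B_k · log₂(1 + h_d_k · p_k / (B_k · N0)); (vii) γ_k · Du_k ≤ t_c_k · f_k; (viii) B_k > 0, f_k ≥ 0, p_k ≥ 0; together with the coupling constraints Σ_k p_k ≤ P_max, Σ_k B_k ≤ B_max, Σ_k f_k ≤ F_max. Then this set is a convex subset of ℝ^{7K}. (Consequently, minimizing the linear objective Σ_k l_k over this set is a convex optimization problem.)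 -/
open Real Set

/-- Convexity of `t ↦ c / (exp (b t) - 1)` on `t > 0`. -/
lemma cner_convexOn {b c : ℝ} (hb : 0 < b) (hc : 0 < c) :
    ConvexOn ℝ (Set.Ioi (0:ℝ)) (fun t => c * (Real.exp (b * t) - 1)⁻¹) := by
  set f : ℝ → ℝ := fun t => c * (Real.exp (b * t) - 1)⁻¹ with hfdef
  set F : ℝ → ℝ := fun t => c * (-(Real.exp (b * t) * b) / (Real.exp (b * t) - 1) ^ 2) with hFdef
  have hgt : ∀ t : ℝ, t ∈ Set.Ioi (0:ℝ) → 1 < Real.exp (b * t) := by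
    intro t ht
    have hbt : 0 < b * t := mul_pos hb ht
    have := Real.add_one_lt_exp (ne_of_gt hbt)
    linarith
  have hlin : ∀ t : ℝ, HasDerivAt (fun s : ℝ => b * s) b t := fun t => by
    simpa using (hasDerivAt_id t).const_mul b
  have hder : ∀ t ∈ Set.Ioi (0:ℝ), HasDerivAt f (F t) t := by
    intro t ht
    have hne : Real.exp (b * t) - 1 ≠ 0 := by have := hgt t ht; linarith
    exact (((hlin t).exp.sub_const 1).inv hne).const_mul c
  have hder2 : ∀ t ∈ Set.Ioi (0:ℝ),
      HasDerivAt F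
        (c * (b ^ 2 * Real.exp (b * t) * (Real.exp (b * t) + 1) / (Real.exp (b * t) - 1) ^ 3))
        t := by
    intro t ht
    have h1 := hgt t ht
    have hne : Real.exp (b * t) - 1 ≠ 0 := by linarith
    have hexp := (hlin t).exp
    have hnum : HasDerivAt (fun s => -(Real.exp (b * s) * b)) (-(Real.exp (b * t) * b * b)) t :=
      (hexp.mul_const b).neg
    have hpow : HasDerivAt (fun s => (Real.exp (b * s) - 1) ^ 2)
        ((2 : ℕ) * (Real.exp (b * t) - 1) ^ (2 - 1) * (Real.exp (b * t) * b)) t :=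
      (hexp.sub_const 1).pow 2
    have hinv := hpow.inv (pow_ne_zero 2 hne)
    have hmul := (hnum.mul hinv).const_mul c
    convert hmul using 1
    · rfl
    · rfl
    · rfl
    norm_num
    field_simp
    ring_nf
    tauto
  have heq : ∀ t ∈ Set.Ioi (0:ℝ), deriv f =ᶠ[nhds t] F := by
    intro t ht
    filter_upwards [Ioi_mem_nhds ht] with s hs using (hder s hs).deriv
  refine convexOn_of_deriv2_nonneg (convex_Ioi 0) ?_ ?_ ?_ ?_
  · intro t ht
    exact ((hder t ht).differentiableAt.continuousAt).continuousWithinAt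
  · intro t ht
    rw [interior_Ioi] at ht
    exact (hder t ht).differentiableAt.differentiableWithinAt
  · intro t ht
    rw [interior_Ioi] at ht
    exact ((hder2 t ht).differentiableAt.congr_of_eventuallyEq
      (heq t ht)).differentiableWithinAt
  · intro t ht
    rw [interior_Ioi] at ht
    show 0 ≤ deriv (deriv f) t
    rw [(heq t ht).deriv_eq, (hder2 t ht).deriv]
    have h1 := hgt t ht
    have hden : (0:ℝ) < (Real.exp (b * t) - 1) ^ 3 := pow_pos (by linarith) 3
    have hnum : (0:ℝ) < b ^ 2 * Real.exp (b * t) * (Real.exp (b * t) + 1) := by positivity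
    positivity

/-- Perspective-type concavity inequality for `B ↦ B·log₂(1 + κp/(B·N0))`. -/
lemma persp_ineq {N0 κ B1 B2 p1 p2 a b : ℝ} (hN0 : 0 < N0) (hκ : 0 < κ)
    (hB1 : 0 < B1) (hB2 : 0 < B2) (hp1 : 0 ≤ p1) (hp2 : 0 ≤ p2)
    (ha : 0 ≤ a) (hb : 0 ≤ b) (hab : a + b = 1) :
    a * (B1 * Real.logb 2 (1 + κ * p1 / (B1 * N0))) +
      b * (B2 * Real.logb 2 (1 + κ * p2 / (B2 * N0))) ≤
    (a * B1 + b * B2) *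
      Real.logb 2 (1 + κ * (a * p1 + b * p2) / ((a * B1 + b * B2) * N0)) := by
  have hB : 0 < a * B1 + b * B2 := by
    rcases ha.lt_or_eq with h | h
    · exact add_pos_of_pos_of_nonneg (mul_pos h hB1) (mul_nonneg hb hB2.le)
    · have hb1 : b = 1 := by linarith
      simp [← h, hb1, hB2]
  set u1 : ℝ := 1 + κ * p1 / (B1 * N0) with hu1def
  set u2 : ℝ := 1 + κ * p2 / (B2 * N0) with hu2def
  set ut : ℝ := 1 + κ * (a * p1 + b * p2) / ((a * B1 + b * B2) * N0) with hutdef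
  have hu1 : (0:ℝ) < u1 := by have : 0 ≤ κ * p1 / (B1 * N0) := by positivity
                              simp only [hu1def]; linarith
  have hu2 : (0:ℝ) < u2 := by have : 0 ≤ κ * p2 / (B2 * N0) := by positivity
                              simp only [hu2def]; linarith
  set w1 : ℝ := a * B1 / (a * B1 + b * B2) with hw1def
  set w2 : ℝ := b * B2 / (a * B1 + b * B2) with hw2def
  have hw1 : 0 ≤ w1 := by positivity
  have hw2 : 0 ≤ w2 := by positivity
  have hwsum : w1 + w2 = 1 := by
    rw [hw1def, hw2def, ← add_div, div_self hB.ne']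
  have hlog := strictConcaveOn_log_Ioi.concaveOn.2 (Set.mem_Ioi.mpr hu1)
    (Set.mem_Ioi.mpr hu2) hw1 hw2 hwsum
  simp only [smul_eq_mul] at hlog
  have harg : w1 * u1 + w2 * u2 = ut := by
    rw [hw1def, hw2def, hu1def, hu2def, hutdef]
    field_simp
    ring
  rw [harg] at hlog
  have key : a * B1 * Real.log u1 + b * B2 * Real.log u2 ≤
      (a * B1 + b * B2) * Real.log ut := by
    have h := mul_le_mul_of_nonneg_left hlog hB.le
    calc a * B1 * Real.log u1 + b * B2 * Real.log u2
        = (a * B1 + b * B2) * (w1 * Real.log u1 + w2 * Real.log u2) := by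
          rw [hw1def, hw2def]; field_simp
      _ ≤ (a * B1 + b * B2) * Real.log ut := h
  have hl2 : (0:ℝ) < Real.log 2 := Real.log_pos one_lt_two
  rw [Real.logb, Real.logb, Real.logb]
  calc a * (B1 * (Real.log u1 / Real.log 2)) + b * (B2 * (Real.log u2 / Real.log 2))
      = (a * B1 * Real.log u1 + b * B2 * Real.log u2) / Real.log 2 := by ring
    _ ≤ ((a * B1 + b * B2) * Real.log ut) / Real.log 2 := by
        gcongr
    _ = (a * B1 + b * B2) * (Real.log ut / Real.log 2) := by ring

set_option maxHeartbeats 1000000 in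
/-- **Theorem 1 of the paper.**  The per-closed-loop resource allocation problem (P3)
is convex: the feasible set of tuples `(l, D, Du, Dd, B, f, p) ∈ (ℝ^K)^7` cut out by the
LQR-cost lower bound, the stability constraint, the CNER constraints, the uplink/downlink
cycle-rate constraints, the computing-latency constraint, the sign constraints and the
coupled power/bandwidth/CPU-frequency budgets is a convex subset of `ℝ^{7K}`. -/
theorem stmt0 (K : ℕ) (hK : 0 < K)
    (n c ρ γ tu td tc hu hd pu : Fin K → ℝ)
    (hn : ∀ k, 0 < n k) (hc : ∀ k, 0 < c k) (hρ : ∀ k, 0 < ρ k) (hγ : ∀ k, 0 < γ k)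
    (htu : ∀ k, 0 < tu k) (htd : ∀ k, 0 < td k) (htc : ∀ k, 0 < tc k)
    (hhu : ∀ k, 0 < hu k) (hhd : ∀ k, 0 < hd k) (hpu : ∀ k, 0 < pu k)
    (dd L : Fin K → ℝ)
    (N0 Bmax Pmax Fmax : ℝ)
    (hN0 : 0 < N0) (hBmax : 0 < Bmax) (hPmax : 0 < Pmax) (hFmax : 0 < Fmax) :
    Convex ℝ {x : (Fin K → ℝ) × (Fin K → ℝ) × (Fin K → ℝ) × (Fin K → ℝ) ×
        (Fin K → ℝ) × (Fin K → ℝ) × (Fin K → ℝ) |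
      -- x = (l, D, Du, Dd, B, f, p)
      (∀ k, c k / ((2:ℝ) ^ ((2 / n k) * (x.2.1 k - L k)) - 1) + dd k ≤ x.1 k) ∧
      (∀ k, L k < x.2.1 k) ∧
      (∀ k, x.2.1 k ≤ ρ k * x.2.2.1 k) ∧
      (∀ k, x.2.1 k ≤ x.2.2.2.1 k) ∧
      (∀ k, x.2.2.1 k ≤
        tu k * x.2.2.2.2.1 k * Real.logb 2 (1 + hu k * pu k / (x.2.2.2.2.1 k * N0))) ∧
      (∀ k, x.2.2.2.1 k ≤
        td k * x.2.2.2.2.1 k *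
          Real.logb 2 (1 + hd k * x.2.2.2.2.2.2 k / (x.2.2.2.2.1 k * N0))) ∧
      (∀ k, γ k * x.2.2.1 k ≤ tc k * x.2.2.2.2.2.1 k) ∧
      (∀ k, 0 < x.2.2.2.2.1 k) ∧
      (∀ k, 0 ≤ x.2.2.2.2.2.1 k) ∧
      (∀ k, 0 ≤ x.2.2.2.2.2.2 k) ∧
      (∑ k, x.2.2.2.2.2.2 k ≤ Pmax) ∧
      (∑ k, x.2.2.2.2.1 k ≤ Bmax) ∧
      (∑ k, x.2.2.2.2.2.1 k ≤ Fmax)} := by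
  intro X hX Y hY θ η hθ hη hθη
  simp only [Set.mem_setOf_eq] at hX hY
  obtain ⟨hX1, hX2, hX3, hX4, hX5, hX6, hX7, hX8, hX9, hX10, hX11, hX12, hX13⟩ := hX
  obtain ⟨hY1, hY2, hY3, hY4, hY5, hY6, hY7, hY8, hY9, hY10, hY11, hY12, hY13⟩ := hY
  simp only [Set.mem_setOf_eq, Prod.fst_add, Prod.snd_add, Prod.smul_fst, Prod.smul_snd,
    Pi.add_apply, Pi.smul_apply, smul_eq_mul]
  have hl2 : (0:ℝ) < Real.log 2 := Real.log_pos one_lt_two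
  refine ⟨?_, ?_, ?_, ?_, ?_, ?_, ?_, ?_, ?_, ?_, ?_, ?_, ?_⟩
  · -- (i) LQR-cost lower bound
    intro k
    set b0 : ℝ := Real.log 2 * (2 / n k) with hb0def
    have hb0 : 0 < b0 := mul_pos hl2 (by have := hn k; positivity)
    have hrw : ∀ z : ℝ, (2:ℝ) ^ ((2 / n k) * z) = Real.exp (b0 * z) := by
      intro z
      rw [Real.rpow_def_of_pos (by norm_num : (0:ℝ) < 2), hb0def, mul_assoc]
    have htx : 0 < X.2.1 k - L k := sub_pos.mpr (hX2 k)
    have hty : 0 < Y.2.1 k - L k := sub_pos.mpr (hY2 k)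
    have hkey := (cner_convexOn hb0 (hc k)).2 (Set.mem_Ioi.mpr htx) (Set.mem_Ioi.mpr hty)
      hθ hη hθη
    simp only [smul_eq_mul] at hkey
    have hX1' : c k * (Real.exp (b0 * (X.2.1 k - L k)) - 1)⁻¹ + dd k ≤ X.1 k := by
      have := hX1 k
      rwa [hrw, div_eq_mul_inv] at this
    have hY1' : c k * (Real.exp (b0 * (Y.2.1 k - L k)) - 1)⁻¹ + dd k ≤ Y.1 k := by
      have := hY1 k
      rwa [hrw, div_eq_mul_inv] at this
    have harg : θ * X.2.1 k + η * Y.2.1 k - L k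
        = θ * (X.2.1 k - L k) + η * (Y.2.1 k - L k) := by linear_combination L k * hθη
    rw [hrw, div_eq_mul_inv, harg]
    calc c k * (Real.exp (b0 * (θ * (X.2.1 k - L k) + η * (Y.2.1 k - L k))) - 1)⁻¹ + dd k
        ≤ θ * (c k * (Real.exp (b0 * (X.2.1 k - L k)) - 1)⁻¹)
          + η * (c k * (Real.exp (b0 * (Y.2.1 k - L k)) - 1)⁻¹) + (θ + η) * dd k := by
          rw [hθη]; linarith [hkey]
      _ = θ * (c k * (Real.exp (b0 * (X.2.1 k - L k)) - 1)⁻¹ + dd k)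
          + η * (c k * (Real.exp (b0 * (Y.2.1 k - L k)) - 1)⁻¹ + dd k) := by ring
      _ ≤ θ * X.1 k + η * Y.1 k :=
          add_le_add (mul_le_mul_of_nonneg_left hX1' hθ) (mul_le_mul_of_nonneg_left hY1' hη)
  · -- (ii) stability
    intro k
    have := convex_Ioi (L k) (Set.mem_Ioi.mpr (hX2 k)) (Set.mem_Ioi.mpr (hY2 k)) hθ hη hθη
    simpa [smul_eq_mul] using this
  · -- (iii)
    intro k
    have h1 := mul_le_mul_of_nonneg_left (hX3 k) hθ
    have h2 := mul_le_mul_of_nonneg_left (hY3 k) hη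
    linarith [h1, h2]
  · -- (iv)
    intro k
    have h1 := mul_le_mul_of_nonneg_left (hX4 k) hθ
    have h2 := mul_le_mul_of_nonneg_left (hY4 k) hη
    linarith
  · -- (v) uplink
    intro k
    have hpersp := persp_ineq hN0 (hhu k) (hX8 k) (hY8 k) (hpu k).le (hpu k).le hθ hη hθη
    have hpu' : θ * pu k + η * pu k = pu k := by linear_combination pu k * hθη
    rw [hpu'] at hpersp
    have h1 := mul_le_mul_of_nonneg_left (hX5 k) hθ
    have h2 := mul_le_mul_of_nonneg_left (hY5 k) hη
    have h3 := mul_le_mul_of_nonneg_left hpersp (htu k).le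
    linarith [h1, h2, h3]
  · -- (vi) downlink
    intro k
    have hpersp := persp_ineq hN0 (hhd k) (hX8 k) (hY8 k) (hX10 k) (hY10 k) hθ hη hθη
    have h1 := mul_le_mul_of_nonneg_left (hX6 k) hθ
    have h2 := mul_le_mul_of_nonneg_left (hY6 k) hη
    have h3 := mul_le_mul_of_nonneg_left hpersp (htd k).le
    linarith [h1, h2, h3]
  · -- (vii) computing
    intro k
    have h1 := mul_le_mul_of_nonneg_left (hX7 k) hθ
    have h2 := mul_le_mul_of_nonneg_left (hY7 k) hη
    linarith [h1, h2]
  · -- (viii) B > 0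
    intro k
    have := convex_Ioi (0:ℝ) (Set.mem_Ioi.mpr (hX8 k)) (Set.mem_Ioi.mpr (hY8 k)) hθ hη hθη
    simpa [smul_eq_mul] using this
  · intro k
    exact add_nonneg (mul_nonneg hθ (hX9 k)) (mul_nonneg hη (hY9 k))
  · intro k
    exact add_nonneg (mul_nonneg hθ (hX10 k)) (mul_nonneg hη (hY10 k))
  · calc (∑ k, (θ * X.2.2.2.2.2.2 k + η * Y.2.2.2.2.2.2 k))
        = θ * (∑ k, X.2.2.2.2.2.2 k) + η * (∑ k, Y.2.2.2.2.2.2 k) := by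
          rw [Finset.sum_add_distrib, ← Finset.mul_sum, ← Finset.mul_sum]
      _ ≤ θ * Pmax + η * Pmax :=
          add_le_add (mul_le_mul_of_nonneg_left hX11 hθ) (mul_le_mul_of_nonneg_left hY11 hη)
      _ = Pmax := by rw [← add_mul, hθη, one_mul]
  · calc (∑ k, (θ * X.2.2.2.2.1 k + η * Y.2.2.2.2.1 k))
        = θ * (∑ k, X.2.2.2.2.1 k) + η * (∑ k, Y.2.2.2.2.1 k) := by
          rw [Finset.sum_add_distrib, ← Finset.mul_sum, ← Finset.mul_sum]
      _ ≤ θ * Bmax + η * Bmax :=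
          add_le_add (mul_le_mul_of_nonneg_left hX12 hθ) (mul_le_mul_of_nonneg_left hY12 hη)
      _ = Bmax := by rw [← add_mul, hθη, one_mul]
  · calc (∑ k, (θ * X.2.2.2.2.2.1 k + η * Y.2.2.2.2.2.1 k))
        = θ * (∑ k, X.2.2.2.2.2.1 k) + η * (∑ k, Y.2.2.2.2.2.1 k) := by
          rw [Finset.sum_add_distrib, ← Finset.mul_sum, ← Finset.mul_sum]
      _ ≤ θ * Fmax + η * Fmax :=
          add_le_add (mul_le_mul_of_nonneg_left hX13 hθ) (mul_le_mul_of_nonneg_left hY13 hη)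
      _ = Fmax := by rw [← add_mul, hθη, one_mul]
end

section
/- Let c > 0, α > 0, d ∈ ℝ, L ∈ ℝ, and define f : ℝ → ℝ by f(D) = c / (2^{α(D − L)} − 1) + d. Then f is strictly convex on the open interval (L, ∞). -/
private lemma aux_exp_gt_one {k L x : ℝ} (hk : 0 < k) (hx : x ∈ Set.Ioi L) :
    1 < Real.exp (k * (x - L)) := by
  have : (0:ℝ) < k * (x - L) := mul_pos hk (by simpa [sub_pos] using hx)
  calc (1:ℝ) = Real.exp 0 := Real.exp_zero.symm
  _ < Real.exp (k * (x - L)) := Real.exp_lt_exp.2 this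

/-- The LQR-cost lower bound `f(D) = c / (2^{α(D − L)} − 1) + d`, viewed as a function of
the closed-loop negentropy rate `D`, is strictly convex on the stability region `(L, ∞)`. -/
theorem stmt1 (c α d L : ℝ) (hc : 0 < c) (hα : 0 < α) :
    StrictConvexOn ℝ (Set.Ioi L)
      (fun D : ℝ => c / ((2:ℝ) ^ (α * (D - L)) - 1) + d) := by
  set k : ℝ := α * Real.log 2 with hkdef
  have hk : 0 < k := mul_pos hα (Real.log_pos one_lt_two)
  set u : ℝ → ℝ := fun D => Real.exp (k * (D - L)) with hu_def
  have hfun : (fun D : ℝ => c / ((2:ℝ) ^ (α * (D - L)) - 1) + d)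
      = fun D : ℝ => c * (u D - 1)⁻¹ + d := by
    funext D
    have : (2:ℝ) ^ (α * (D - L)) = u D := by
      rw [Real.rpow_def_of_pos (by norm_num : (0:ℝ) < 2)]
      simp only [hu_def]
      rw [hkdef]
      ring_nf
    rw [this, div_eq_mul_inv]
  rw [hfun]
  -- derivative setups
  have hu_deriv : ∀ x : ℝ, HasDerivAt u (k * u x) x := by
    intro x
    have h1 : HasDerivAt (fun D : ℝ => k * (D - L)) k x := by
      simpa using ((hasDerivAt_id x).sub_const L).const_mul k
    simpa [hu_def, mul_comm] using h1.exp
  set g : ℝ → ℝ := fun D => c * (-(k * u D) / (u D - 1) ^ 2) with hg_def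
  have hf_deriv : ∀ x ∈ Set.Ioi L,
      HasDerivAt (fun D => c * (u D - 1)⁻¹) (g x) x := by
    intro x hx
    have hne : u x - 1 ≠ 0 := sub_ne_zero.2 (ne_of_gt (aux_exp_gt_one hk hx))
    have hv : HasDerivAt (fun D => u D - 1) (k * u x) x := (hu_deriv x).sub_const 1
    exact (hv.inv hne).const_mul c
  have hg_deriv : ∀ x ∈ Set.Ioi L,
      HasDerivAt g (c * k ^ 2 * u x * (u x + 1) / (u x - 1) ^ 3) x := by
    intro x hx
    have hne : u x - 1 ≠ 0 := sub_ne_zero.2 (ne_of_gt (aux_exp_gt_one hk hx))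
    have hv : HasDerivAt (fun D => u D - 1) (k * u x) x := (hu_deriv x).sub_const 1
    have hnum : HasDerivAt (fun D => -(k * u D)) (-(k * (k * u x))) x :=
      (((hu_deriv x).const_mul k)).neg
    have hden : HasDerivAt (fun D => (u D - 1) ^ 2)
        ((2 : ℕ) * (u x - 1) ^ 1 * (k * u x)) x := hv.pow 2
    have hdiv := (hnum.div hden (pow_ne_zero 2 hne))
    have := hdiv.const_mul c
    refine (this : HasDerivAt g _ x).congr_deriv ?_
    rw [← mul_div_assoc, div_eq_div_iff (pow_ne_zero 2 (pow_ne_zero 2 hne)) (pow_ne_zero 3 hne)]; push_cast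
    ring
  apply StrictConvexOn.add_const _ d
  have key : StrictConvexOn ℝ (Set.Ioi L) (fun D : ℝ => c * (u D - 1)⁻¹) := by
    apply strictConvexOn_of_deriv2_pos (convex_Ioi L)
    · intro x hx
      exact (hf_deriv x hx).continuousAt.continuousWithinAt
    · intro x hx
      rw [interior_Ioi] at hx
      have heq : Set.EqOn (deriv (fun D => c * (u D - 1)⁻¹)) g (Set.Ioi L) :=
        fun y hy => (hf_deriv y hy).deriv
      have hd2 : deriv (deriv (fun D => c * (u D - 1)⁻¹)) x = deriv g x := by
        apply Filter.EventuallyEq.deriv_eq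
        exact Filter.eventuallyEq_of_mem (Ioi_mem_nhds hx) heq
      simp only [Function.iterate_succ, Function.iterate_zero, Function.comp, id]
      rw [hd2, (hg_deriv x hx).deriv]
      have h1 : 1 < u x := aux_exp_gt_one hk hx
      have hpos1 : 0 < u x - 1 := sub_pos.2 h1
      have hupos : 0 < u x := lt_trans one_pos h1
      positivity
  simpa using key
end

section
/- Let a > 0 and b > 0. The function g(x, y) = a · x · log₂(1 + b · y / x) is concave on the convex set {(x, y) ∈ ℝ² : x > 0, y ≥ 0}. -/
open Real Set

lemma key_rate_ineq (b : ℝ) (hb : 0 < b)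
    (x₁ y₁ x₂ y₂ s t : ℝ) (hx₁ : 0 < x₁) (hy₁ : 0 ≤ y₁) (hx₂ : 0 < x₂) (hy₂ : 0 ≤ y₂)
    (hs : 0 < s) (ht : 0 < t) (hst : s + t = 1) :
    s * (x₁ * Real.log (1 + b * y₁ / x₁)) + t * (x₂ * Real.log (1 + b * y₂ / x₂))
      ≤ (s * x₁ + t * x₂) * Real.log (1 + b * (s * y₁ + t * y₂) / (s * x₁ + t * x₂)) := by
  set X := s * x₁ + t * x₂ with hX
  have hXpos : 0 < X := by positivity
  have hu : (0:ℝ) < 1 + b * y₁ / x₁ := by positivity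
  have hv : (0:ℝ) < 1 + b * y₂ / x₂ := by positivity
  have hl : (0:ℝ) ≤ s * x₁ / X := by positivity
  have hm : (0:ℝ) ≤ t * x₂ / X := by positivity
  have hsum : s * x₁ / X + t * x₂ / X = 1 := by field_simp; exact hX.symm
  have hconc := (strictConcaveOn_log_Ioi.concaveOn).2 (mem_Ioi.2 hu) (mem_Ioi.2 hv) hl hm hsum
  simp only [smul_eq_mul] at hconc
  have harg : (s * x₁ / X) * (1 + b * y₁ / x₁) + (t * x₂ / X) * (1 + b * y₂ / x₂)
      = 1 + b * (s * y₁ + t * y₂) / X := by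
    field_simp
    ring
  rw [harg] at hconc
  have h2 := mul_le_mul_of_nonneg_left hconc hXpos.le
  calc s * (x₁ * Real.log (1 + b * y₁ / x₁)) + t * (x₂ * Real.log (1 + b * y₂ / x₂))
      = X * (s * x₁ / X * Real.log (1 + b * y₁ / x₁)
          + t * x₂ / X * Real.log (1 + b * y₂ / x₂)) := by
        field_simp
    _ ≤ X * Real.log (1 + b * (s * y₁ + t * y₂) / X) := h2

/-- The communication rate function `g(x, y) = a·x·log₂(1 + b·y/x)` (bandwidth `x`,
transmit power `y`) is concave on `{(x, y) : x > 0, y ≥ 0}`. -/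
theorem stmt4 (a b : ℝ) (ha : 0 < a) (hb : 0 < b) :
    ConcaveOn ℝ {q : ℝ × ℝ | 0 < q.1 ∧ 0 ≤ q.2}
      (fun q : ℝ × ℝ => a * q.1 * Real.logb 2 (1 + b * q.2 / q.1)) := by
  constructor
  · intro p hp q hq s t hs ht hst
    obtain ⟨hp1, hp2⟩ := hp
    obtain ⟨hq1, hq2⟩ := hq
    constructor
    · simp only [Prod.fst_add, Prod.smul_fst, smul_eq_mul]
      rcases hs.eq_or_lt with h | h
      · have ht1 : t = 1 := by linarith
        subst ht1
        simp [← h, hq1]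
      · have : 0 < s * p.1 := mul_pos h hp1
        have : 0 ≤ t * q.1 := mul_nonneg ht hq1.le
        linarith
    · simp only [Prod.snd_add, Prod.smul_snd, smul_eq_mul]
      positivity
  · intro p hp q hq s t hs ht hst
    obtain ⟨hp1, hp2⟩ := hp
    obtain ⟨hq1, hq2⟩ := hq
    rcases hs.eq_or_lt with h | hs'
    · have ht1 : t = 1 := by linarith
      subst ht1
      simp [← h]
    rcases ht.eq_or_lt with h | ht'
    · have hs1 : s = 1 := by linarith
      subst hs1
      simp [← h]
    have hkey := key_rate_ineq b hb p.1 p.2 q.1 q.2 s t hp1 hp2 hq1 hq2 hs' ht' hst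
    have hl2 : (0:ℝ) < Real.log 2 := Real.log_pos one_lt_two
    simp only [Prod.fst_add, Prod.snd_add, Prod.smul_fst, Prod.smul_snd, smul_eq_mul,
      Real.logb]
    calc s * (a * p.1 * (Real.log (1 + b * p.2 / p.1) / Real.log 2))
          + t * (a * q.1 * (Real.log (1 + b * q.2 / q.1) / Real.log 2))
        = a / Real.log 2 * (s * (p.1 * Real.log (1 + b * p.2 / p.1))
            + t * (q.1 * Real.log (1 + b * q.2 / q.1))) := by ring
      _ ≤ a / Real.log 2 * ((s * p.1 + t * q.1)
            * Real.log (1 + b * (s * p.2 + t * q.2) / (s * p.1 + t * q.1))) := by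
          exact mul_le_mul_of_nonneg_left hkey (by positivity)
      _ = a * (s * p.1 + t * q.1)
            * (Real.log (1 + b * (s * p.2 + t * q.2) / (s * p.1 + t * q.1)) / Real.log 2) := by
          ring
end

section
/- Let a > 0, b > 0. The set {(x, y, z) ∈ ℝ³ : x > 0, y ≥ 0, z ≤ a · x · log₂(1 + b · y / x)} is a convex subset of ℝ³. -/
open Real

private lemma key_ineq (b : ℝ) (hb : 0 < b) {x₁ x₂ y₁ y₂ t s : ℝ}
    (hx₁ : 0 < x₁) (hx₂ : 0 < x₂) (hy₁ : 0 ≤ y₁) (hy₂ : 0 ≤ y₂)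
    (ht : 0 < t) (hs : 0 < s) (hts : t + s = 1) :
    t * (x₁ * Real.log (1 + b * y₁ / x₁)) + s * (x₂ * Real.log (1 + b * y₂ / x₂)) ≤
      (t * x₁ + s * x₂) * Real.log (1 + b * (t * y₁ + s * y₂) / (t * x₁ + s * x₂)) := by
  set X := t * x₁ + s * x₂ with hX
  have hXpos : 0 < X := by positivity
  have hu₁ : (1 : ℝ) + b * y₁ / x₁ ∈ Set.Ioi (0 : ℝ) := by
    have : 0 ≤ b * y₁ / x₁ := by positivity
    simp [Set.mem_Ioi]; linarith
  have hu₂ : (1 : ℝ) + b * y₂ / x₂ ∈ Set.Ioi (0 : ℝ) := by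
    have : 0 ≤ b * y₂ / x₂ := by positivity
    simp [Set.mem_Ioi]; linarith
  have hw₁ : 0 ≤ t * x₁ / X := by positivity
  have hw₂ : 0 ≤ s * x₂ / X := by positivity
  have hwsum : t * x₁ / X + s * x₂ / X = 1 := by field_simp; exact hX.symm
  have hconc := (strictConcaveOn_log_Ioi.concaveOn).2 hu₁ hu₂ hw₁ hw₂ hwsum
  simp only [smul_eq_mul] at hconc
  have hmix : t * x₁ / X * (1 + b * y₁ / x₁) + s * x₂ / X * (1 + b * y₂ / x₂)
      = 1 + b * (t * y₁ + s * y₂) / X := by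
    field_simp
    ring
  rw [hmix] at hconc
  have := mul_le_mul_of_nonneg_left hconc (le_of_lt hXpos)
  calc t * (x₁ * Real.log (1 + b * y₁ / x₁)) + s * (x₂ * Real.log (1 + b * y₂ / x₂))
      = X * (t * x₁ / X * Real.log (1 + b * y₁ / x₁) +
          s * x₂ / X * Real.log (1 + b * y₂ / x₂)) := by
        field_simp
    _ ≤ X * Real.log (1 + b * (t * y₁ + s * y₂) / X) := this

/-- The hypograph-type feasible region of a single uplink/downlink cycle-rate constraint,
`{(x, y, z) : x > 0, y ≥ 0, z ≤ a·x·log₂(1 + b·y/x)}`, is a convex subset of `ℝ³`. -/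
theorem stmt9 (a b : ℝ) (ha : 0 < a) (hb : 0 < b) :
    Convex ℝ {q : ℝ × ℝ × ℝ |
      0 < q.1 ∧ 0 ≤ q.2.1 ∧ q.2.2 ≤ a * q.1 * Real.logb 2 (1 + b * q.2.1 / q.1)} := by
  rintro ⟨x₁, y₁, z₁⟩ ⟨h1, h2, h3⟩ ⟨x₂, y₂, z₂⟩ ⟨g1, g2, g3⟩ t s ht hs hts
  simp only [Set.mem_setOf_eq, Prod.smul_mk, Prod.mk_add_mk, smul_eq_mul] at *
  have hXpos : 0 < t * x₁ + s * x₂ := by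
    rcases lt_or_eq_of_le ht with ht' | ht'
    · have : 0 ≤ s * x₂ := by positivity
      nlinarith
    · have hs1 : s = 1 := by linarith
      simp [← ht', hs1]; linarith
  refine ⟨hXpos, by positivity, ?_⟩
  have hlog2 : (0:ℝ) < Real.log 2 := Real.log_pos (by norm_num)
  -- reduce logb to log
  have hkey : t * (x₁ * Real.log (1 + b * y₁ / x₁)) + s * (x₂ * Real.log (1 + b * y₂ / x₂)) ≤
      (t * x₁ + s * x₂) * Real.log (1 + b * (t * y₁ + s * y₂) / (t * x₁ + s * x₂)) := by
    rcases eq_or_lt_of_le ht with ht' | ht'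
    · have hs1 : s = 1 := by linarith
      simp [← ht', hs1]
    · rcases eq_or_lt_of_le hs with hs' | hs'
      · have ht1 : t = 1 := by linarith
        simp [← hs', ht1]
      · exact key_ineq b hb h1 g1 h2 g2 ht' hs' hts
  have hz : t * z₁ + s * z₂ ≤
      t * (a * x₁ * Real.logb 2 (1 + b * y₁ / x₁)) +
      s * (a * x₂ * Real.logb 2 (1 + b * y₂ / x₂)) := by
    have := mul_le_mul_of_nonneg_left h3 ht
    have := mul_le_mul_of_nonneg_left g3 hs
    linarith
  refine hz.trans ?_
  simp only [Real.logb, Real.log_div, div_eq_mul_inv]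
  have hscale := mul_le_mul_of_nonneg_left hkey
    (le_of_lt (mul_pos ha (inv_pos.mpr hlog2)))
  calc t * (a * x₁ * (Real.log (1 + b * y₁ / x₁) * (Real.log 2)⁻¹)) +
        s * (a * x₂ * (Real.log (1 + b * y₂ / x₂) * (Real.log 2)⁻¹))
      = a * (Real.log 2)⁻¹ * (t * (x₁ * Real.log (1 + b * y₁ / x₁)) +
          s * (x₂ * Real.log (1 + b * y₂ / x₂))) := by ring
    _ ≤ a * (Real.log 2)⁻¹ * ((t * x₁ + s * x₂) *
          Real.log (1 + b * (t * y₁ + s * y₂) / (t * x₁ + s * x₂))) := hscale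
    _ = a * (t * x₁ + s * x₂) *
          (Real.log (1 + b * (t * y₁ + s * y₂) / (t * x₁ + s * x₂)) * (Real.log 2)⁻¹) := by ring
end
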